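/- For every p ≥ 1, the map a ↦ F_{a,1}^{∘p}(1/2) from ℝ to ℝ is strictly increasing, and its partial derivative with respect to a is at least 1 for all a. -/

import Mathlib

/-- Lift of the double standard map. -/
noncomputable def F (a b : ℝ) : ℝ → ℝ :=
  fun x => 2 * x + a - (b / Real.pi) * Real.sin (2 * Real.pi * x)

lemma key_deriv (p : ℕ) (a : ℝ) :
    ∃ d : ℝ, HasDerivAt (fun a : ℝ => (F a 1)^[p] (1/2)) d a ∧ 0 ≤ d ∧ (1 ≤ p → 1 ≤ d) := by
  induction p with
  | zero =>
      exact ⟨0, by simpa using hasDerivAt_const a ((1:ℝ)/2), le_refl 0, by omega⟩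
  | succ n ih =>
      obtain ⟨d, hd, hd0, _⟩ := ih
      set g := fun a : ℝ => (F a 1)^[n] (1/2) with hg
      have heq : (fun a : ℝ => (F a 1)^[n+1] (1/2))
          = fun a => 2 * g a + a - (1 / Real.pi) * Real.sin (2 * Real.pi * g a) := by
        funext a; simp [Function.iterate_succ_apply', F, hg]
      have hsin : HasDerivAt (fun a => Real.sin (2 * Real.pi * g a))
          (Real.cos (2 * Real.pi * g a) * (2 * Real.pi * d)) a := by
        have := (Real.hasDerivAt_sin (2 * Real.pi * g a)).comp a (hd.const_mul (2 * Real.pi))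
        exact this
      have H : HasDerivAt (fun a => 2 * g a + a - (1/Real.pi) * Real.sin (2 * Real.pi * g a))
          (2 * d + 1 - (1/Real.pi) * (Real.cos (2 * Real.pi * g a) * (2 * Real.pi * d))) a :=
        ((hd.const_mul 2).add (hasDerivAt_id a)).sub (hsin.const_mul (1/Real.pi))
      have hpi := Real.pi_pos
      have hval : (1/Real.pi) * (Real.cos (2 * Real.pi * g a) * (2 * Real.pi * d))
          = 2 * Real.cos (2 * Real.pi * g a) * d := by
        field_simp
      refine ⟨2 * d + 1 - 2 * Real.cos (2 * Real.pi * g a) * d, ?_, ?_, fun _ => ?_⟩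
      · rw [heq]; convert H using 1; rw [hval]
      · nlinarith [Real.cos_le_one (2 * Real.pi * g a),
          Real.neg_one_le_cos (2 * Real.pi * g a)]
      · nlinarith [Real.cos_le_one (2 * Real.pi * g a)]

/-- For `p ≥ 1`, `a ↦ F_{a,1}^{∘p}(1/2)` is strictly increasing and its derivative
with respect to `a` is at least `1` everywhere. -/
theorem stmt_3 (p : ℕ) (hp : 1 ≤ p) :
    StrictMono (fun a : ℝ => (F a 1)^[p] (1/2)) ∧
    ∀ a : ℝ, ∃ d : ℝ, HasDerivAt (fun a : ℝ => (F a 1)^[p] (1/2)) d a ∧ 1 ≤ d := by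
  constructor
  · apply strictMono_of_deriv_pos
    intro x
    obtain ⟨d, hd, _, h1⟩ := key_deriv p x
    rw [hd.deriv]
    linarith [h1 hp]
  · intro a
    obtain ⟨d, hd, _, h1⟩ := key_deriv p a
    exact ⟨d, hd, h1 hp⟩
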